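/- A linear fractional map φ(z) = (az+b)/(cz+d) with ad-bc ≠ 0 maps the open unit disk into itself if and only if |d| > |c| and 2|a·conj(b) - c·conj(d)| ≤ |c|² + |d|² - |a|² - |b|². -/

import Mathlib

open Complex

private lemma abs_add_lb (x y : ℂ) : ‖y‖ - ‖x‖ ≤ ‖(x + y)‖ := by
  have h : ‖y‖ ≤ ‖(x + y)‖ + ‖x‖ := by
    calc ‖y‖ = ‖(x + y + -x)‖ := by congr 1; ring
      _ ≤ ‖(x + y)‖ + ‖(-x)‖ := norm_add_le _ _
      _ = ‖(x + y)‖ + ‖x‖ := by rw [norm_neg]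
  linarith

private lemma abs_sub_lb (x y : ℂ) : ‖y‖ - ‖x‖ ≤ ‖(x - y)‖ := by
  have h : ‖y‖ ≤ ‖(x - y)‖ + ‖x‖ := by
    calc ‖y‖ = ‖(-(x - y) + x)‖ := by congr 1; ring
      _ ≤ ‖(-(x - y))‖ + ‖x‖ := norm_add_le _ _
      _ = ‖(x - y)‖ + ‖x‖ := by rw [norm_neg]
  linarith

private lemma lft_idF (a b c d z : ℂ) :
    normSq (c*z+d) - normSq (a*z+b) =
      (normSq c - normSq a) * normSq z
        + 2 * ((c * (starRingEnd ℂ) d - a * (starRingEnd ℂ) b) * z).re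
        + (normSq d - normSq b) := by
  simp [Complex.normSq_apply, Complex.add_re, Complex.add_im, Complex.mul_re, Complex.mul_im,
    Complex.sub_re, Complex.sub_im, Complex.conj_re, Complex.conj_im]
  ring

private lemma lft_id1 (a b c d : ℂ) :
    normSq (c * (starRingEnd ℂ) d - a * (starRingEnd ℂ) b)
      - (normSq c - normSq a) * (normSq d - normSq b) = normSq (a*d - b*c) := by
  simp [Complex.normSq_apply, Complex.mul_re, Complex.mul_im,
    Complex.sub_re, Complex.sub_im, Complex.conj_re, Complex.conj_im]
  ring

private lemma lft_id2 (a b c d : ℂ) :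
    (normSq c - normSq a) * normSq d + (normSq d - normSq b) * normSq c + normSq (a*d-b*c)
      = 2 * ((c * (starRingEnd ℂ) d - a * (starRingEnd ℂ) b) * ((starRingEnd ℂ) c * d)).re := by
  simp [Complex.normSq_apply, Complex.mul_re, Complex.mul_im,
    Complex.sub_re, Complex.sub_im, Complex.conj_re, Complex.conj_im]
  ring

private lemma core_real (A B C D Bb δ r : ℝ) (hBb : 0 ≤ Bb) (hδ : 0 < δ)
    (hC : 0 ≤ C)
    (hr0 : 0 ≤ r) (hr1 : r < 1) (hCD : C < D)
    (f1 : Bb^2 - (C^2-A^2)*(D^2-B^2) = δ^2)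
    (f2 : 2*Bb ≤ C^2+D^2-A^2-B^2)
    (f5 : (C^2-A^2)*D^2 + (D^2-B^2)*C^2 + δ^2 ≤ 2*Bb*C*D) :
    0 < (C^2-A^2)*r^2 - 2*Bb*r + (D^2-B^2) := by
  set α := C^2-A^2 with hα
  set γ := D^2-B^2 with hγ
  rcases le_or_gt α 0 with ha | ha
  · have hγpos : 0 < γ := by nlinarith [sq_nonneg Bb]
    nlinarith [mul_pos (by linarith : (0:ℝ) < 1 - r) (by nlinarith : (0:ℝ) < γ - α*r),
      mul_nonneg hr0 (by linarith : (0:ℝ) ≤ α + γ - 2*Bb)]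
  · have hCpos : 0 < C := by
      rcases hC.lt_or_eq with h | h
      · exact h
      · exfalso; nlinarith
    have key : (D-C)*C^2 * ((C^2-A^2)*r^2 - 2*Bb*r + (D^2-B^2)) =
        (D-r*C)*C^2 * (α - 2*Bb + γ) - (1-r)*C*((α*D^2 - 2*Bb*C*D + γ*C^2))
          + α*(D-C)*(1-r)*(D-r*C)*C := by
      simp only [hα, hγ]; ring
    have hDrC : 0 < D - r*C := by nlinarith
    have h1 : 0 ≤ (D-r*C)*C^2 * (α - 2*Bb + γ) :=
      mul_nonneg (mul_nonneg hDrC.le (sq_nonneg C)) (by linarith)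
    have h2 : α*D^2 - 2*Bb*C*D + γ*C^2 ≤ -δ^2 := by linarith
    have h3 : 0 < (1-r)*C := mul_pos (by linarith) hCpos
    have h4 : 0 < α*(D-C)*(1-r)*(D-r*C)*C :=
      mul_pos (mul_pos (mul_pos (mul_pos ha (by linarith)) (by linarith)) hDrC) hCpos
    have h5 : 0 < -((1-r)*C*(α*D^2 - 2*Bb*C*D + γ*C^2)) := by
      nlinarith [mul_pos h3 (show (0:ℝ) < -(α*D^2 - 2*Bb*C*D + γ*C^2) by nlinarith [pow_pos hδ 2])]
    have hpos : 0 < (D-C)*C^2 * ((C^2-A^2)*r^2 - 2*Bb*r + (D^2-B^2)) := by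
      rw [key]; linarith
    have hfac : 0 < (D-C)*C^2 := mul_pos (by linarith) (pow_pos hCpos 2)
    by_contra hcon
    push_neg at hcon
    have := mul_nonpos_of_nonneg_of_nonpos hfac.le hcon
    linarith

private lemma limit_real (α B γ : ℝ)
    (hpos : ∀ t : ℝ, 0 ≤ t → t < 1 → 0 < α*t^2 - 2*B*t + γ) :
    0 ≤ α - 2*B + γ := by
  by_contra hcon
  push_neg at hcon
  set e := -(α - 2*B + γ) with he
  have he0 : 0 < e := by simp only [he]; linarith
  set K := 3*|α| + 2*|B| + 1 with hK
  have hK0 : 0 < K := by positivity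
  set s := min (1/2 : ℝ) (e/K) with hs
  have hs0 : 0 < s := lt_min (by norm_num) (div_pos he0 hK0)
  have hs1 : s ≤ 1/2 := min_le_left _ _
  have hs2 : s*K ≤ e := by
    have : s ≤ e/K := min_le_right _ _
    exact (le_div_iff₀ hK0).mp this
  have hb : α*s - 2*α + 2*B ≤ K := by
    have h1 : α*s ≤ |α| * s := mul_le_mul_of_nonneg_right (le_abs_self α) hs0.le
    have h2 : |α| * s ≤ |α| * 1 := mul_le_mul_of_nonneg_left (by linarith) (abs_nonneg α)
    have := neg_abs_le α
    have := le_abs_self B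
    nlinarith
  have h6 : s*(α*s - 2*α + 2*B) ≤ s*K := mul_le_mul_of_nonneg_left hb hs0.le
  have hp := hpos (1-s) (by linarith) (by linarith)
  have hring : α*(1-s)^2 - 2*B*(1-s) + γ = -e + s*(α*s - 2*α + 2*B) := by
    simp only [he]; ring
  rw [hring] at hp
  linarith

theorem lft_self_map_criterion' (a b c d : ℂ) (h : a * d - b * c ≠ 0) :
    (∀ z : ℂ, ‖z‖ < 1 → ‖((a * z + b) / (c * z + d))‖ < 1) ↔
      (‖c‖ < ‖d‖ ∧
        2 * ‖(a * (starRingEnd ℂ) b - c * (starRingEnd ℂ) d)‖ ≤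
          ‖c‖ ^ 2 + ‖d‖ ^ 2 - ‖a‖ ^ 2 - ‖b‖ ^ 2) := by
  have habs_swap : ‖(a * (starRingEnd ℂ) b - c * (starRingEnd ℂ) d)‖
      = ‖(c * (starRingEnd ℂ) d - a * (starRingEnd ℂ) b)‖ :=
    norm_sub_rev _ _
  obtain ⟨β, hβdef⟩ : ∃ β : ℂ, β = c * (starRingEnd ℂ) d - a * (starRingEnd ℂ) b := ⟨_, rfl⟩
  rw [← hβdef] at habs_swap
  constructor
  · intro H
    have hcd : ‖c‖ < ‖d‖ := by
      by_contra hcon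
      push_neg at hcon
      have hc0 : c ≠ 0 := by
        intro hc
        have hd0 : d = 0 := by
          rw [hc] at hcon
          simp only [norm_zero] at hcon
          exact norm_eq_zero.mp (le_antisymm hcon (norm_nonneg d))
        rw [hc, hd0] at h
        simp at h
      rcases eq_or_ne d 0 with hd0 | hd0
      · -- d = 0
        have hb0 : b ≠ 0 := by
          intro hb; rw [hd0, hb] at h; simp at h
        set s : ℝ := min (1/2) (‖b‖ / (‖a‖ + ‖c‖ + 1)) with hs
        have hs0 : 0 < s := lt_min (by norm_num) (div_pos (norm_pos_iff.mpr hb0) (by positivity))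
        have hs1 : s < 1 := lt_of_le_of_lt (min_le_left _ _) (by norm_num)
        have hsb : s * (‖a‖ + ‖c‖ + 1) ≤ ‖b‖ := by
          have h2 : s ≤ ‖b‖ / (‖a‖ + ‖c‖ + 1) := min_le_right _ _
          exact (le_div_iff₀ (by positivity)).mp h2
        have hz : ‖((s:ℂ))‖ < 1 := by
          rw [Complex.norm_real, Real.norm_eq_abs, abs_of_pos hs0]; exact hs1
        have hH := H (s:ℂ) hz
        rw [hd0, add_zero, norm_div] at hH
        have hden : ‖(c * (s:ℂ))‖ = ‖c‖ * s := by
          rw [norm_mul, Complex.norm_real, Real.norm_eq_abs, abs_of_pos hs0]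
        have hnum : ‖b‖ - ‖a‖ * s ≤ ‖(a * (s:ℂ) + b)‖ := by
          have h3 := abs_add_lb (a * (s:ℂ)) b
          rw [norm_mul, Complex.norm_real, Real.norm_eq_abs, abs_of_pos hs0] at h3
          linarith
        have hdenpos : 0 < ‖(c * (s:ℂ))‖ := by
          rw [hden]; exact mul_pos (norm_pos_iff.mpr hc0) hs0
        rw [div_lt_one hdenpos] at hH
        rw [hden] at hH
        nlinarith [norm_nonneg a, norm_nonneg c]
      · -- d ≠ 0, abs d ≤ abs c
        set δ' := ‖(a*d - b*c)‖ with hδ'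
        have hδ'0 : 0 < δ' := norm_pos_iff.mpr h
        set M := ‖(a*d)‖ + ‖(c*d)‖ + 1 with hM
        have hM0 : 0 < M := by positivity
        set ε : ℝ := min (1/2) (δ'/M) with hε
        have hε0 : 0 < ε := lt_min (by norm_num) (div_pos hδ'0 hM0)
        have hε1 : ε ≤ 1/2 := min_le_left _ _
        have hεb : ε * M ≤ δ' := by
          have h2 : ε ≤ δ'/M := min_le_right _ _
          exact (le_div_iff₀ hM0).mp h2
        set z : ℂ := -((1-ε : ℝ) : ℂ) * d / c with hz
        have hzabs : ‖z‖ = (1-ε) * (‖d‖ / ‖c‖) := by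
          rw [hz, norm_div, norm_mul, norm_neg, Complex.norm_real, Real.norm_eq_abs,
            abs_of_pos (by linarith : (0:ℝ) < 1-ε)]
          ring
        have hzlt : ‖z‖ < 1 := by
          rw [hzabs]
          have h1 : ‖d‖ / ‖c‖ ≤ 1 :=
            div_le_one_of_le₀ hcon (norm_nonneg c)
          nlinarith
        have hczd : c * z + d = ((ε : ℝ) : ℂ) * d := by
          rw [hz]; field_simp; push_cast; ring
        have hazb : a * z + b = (((ε : ℝ) : ℂ) * (a*d) - (a*d - b*c)) / c := by
          rw [hz]; field_simp; push_cast; ring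
        have hH := H z hzlt
        rw [norm_div] at hH
        have hdenval : ‖(c * z + d)‖ = ε * ‖d‖ := by
          rw [hczd, norm_mul, Complex.norm_real, Real.norm_eq_abs, abs_of_pos hε0]
        have hdenpos : 0 < ‖(c * z + d)‖ := by
          rw [hdenval]
          exact mul_pos hε0 (norm_pos_iff.mpr hd0)
        rw [div_lt_one hdenpos] at hH
        have hstep : δ' - ε * ‖(a*d)‖ ≤ ‖(((ε:ℝ):ℂ) * (a*d) - (a*d - b*c))‖ := by
          have h3 := abs_sub_lb (((ε:ℝ):ℂ) * (a*d)) (a*d - b*c)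
          rw [norm_mul, Complex.norm_real, Real.norm_eq_abs, abs_of_pos hε0] at h3
          exact le_trans (by rw [hδ']) h3
        have hnum : (δ' - ε * ‖(a*d)‖) / ‖c‖ ≤ ‖(a * z + b)‖ := by
          rw [hazb, norm_div]
          gcongr
        have hlt2 : (δ' - ε * ‖(a*d)‖) / ‖c‖ < ε * ‖d‖ := by
          rw [hdenval] at hH
          linarith
        have hlt3 : δ' - ε * ‖(a*d)‖ < ε * ‖d‖ * ‖c‖ := by
          rw [div_lt_iff₀ (norm_pos_iff.mpr hc0)] at hlt2
          linarith
        have hcd_mul : ‖(c*d)‖ = ‖c‖ * ‖d‖ := norm_mul _ _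
        nlinarith
    refine ⟨hcd, ?_⟩
    rw [habs_swap]
    set Bb := ‖β‖ with hBb
    have hu : ∃ u : ℂ, ‖u‖ = 1 ∧ (β * u).re = -Bb := by
      rcases eq_or_ne β 0 with hb | hb
      · refine ⟨1, by simp, ?_⟩
        rw [hb]; simp [hBb, hb]
      · have hBb0 : (0:ℝ) < Bb := norm_pos_iff.mpr hb
        refine ⟨-(starRingEnd ℂ) β / ((Bb:ℝ):ℂ), ?_, ?_⟩
        · rw [norm_div, norm_neg, Complex.norm_conj, Complex.norm_real, Real.norm_eq_abs,
            abs_of_pos hBb0]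
          exact div_self hBb0.ne'
        · have hmul : β * (-(starRingEnd ℂ) β / ((Bb:ℝ):ℂ)) = -(((normSq β / Bb : ℝ)):ℂ) := by
            calc β * (-(starRingEnd ℂ) β / ((Bb:ℝ):ℂ))
                = -(β * (starRingEnd ℂ) β)/((Bb:ℝ):ℂ) := by ring
              _ = -(((normSq β : ℝ)):ℂ)/((Bb:ℝ):ℂ) := by rw [Complex.mul_conj]
              _ = -(((normSq β / Bb : ℝ)):ℂ) := by rw [Complex.ofReal_div]; ring
          rw [hmul]
          simp only [Complex.neg_re, Complex.ofReal_re]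
          rw [← Complex.sq_norm β, ← hBb, pow_two, mul_div_assoc, div_self hBb0.ne', mul_one]
    obtain ⟨u, hu1, hu2⟩ := hu
    have htpos : ∀ t : ℝ, 0 ≤ t → t < 1 →
        0 < (‖c‖^2 - ‖a‖^2)*t^2 - 2*Bb*t
          + (‖d‖^2 - ‖b‖^2) := by
      intro t ht0 ht1
      set zt : ℂ := ((t:ℝ):ℂ) * u with hzt
      have hztabs : ‖zt‖ = t := by
        rw [hzt, norm_mul, Complex.norm_real, Real.norm_eq_abs, _root_.abs_of_nonneg ht0, hu1, mul_one]
      have hden : c * zt + d ≠ 0 := by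
        intro heq
        have hd : d = -(c*zt) := by linear_combination heq
        have h5 : ‖d‖ ≤ ‖c‖ * ‖zt‖ := by
          rw [hd, norm_neg, norm_mul]
        rw [hztabs] at h5
        nlinarith [norm_nonneg c]
      have hH := H zt (by rw [hztabs]; exact ht1)
      rw [norm_div, div_lt_one (norm_pos_iff.mpr hden)] at hH
      have hsq : normSq (a*zt+b) < normSq (c*zt+d) := by
        rw [← Complex.sq_norm, ← Complex.sq_norm]
        exact pow_lt_pow_left₀ hH (norm_nonneg _) two_ne_zero
      have hF := lft_idF a b c d zt
      rw [← hβdef] at hF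
      have hre : (β * zt).re = -(t*Bb) := by
        have h7 : β * zt = ((t:ℝ):ℂ) * (β * u) := by rw [hzt]; ring
        rw [h7]
        simp only [Complex.mul_re, Complex.ofReal_re, Complex.ofReal_im, hu2]
        ring
      have hz2 : normSq zt = t^2 := by rw [← Complex.sq_norm, hztabs]
      rw [hz2, hre] at hF
      have e1 : normSq c = ‖c‖ ^ 2 := (Complex.sq_norm c).symm
      have e2 : normSq a = ‖a‖ ^ 2 := (Complex.sq_norm a).symm
      have e3 : normSq d = ‖d‖ ^ 2 := (Complex.sq_norm d).symm
      have e4 : normSq b = ‖b‖ ^ 2 := (Complex.sq_norm b).symm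
      rw [e1, e2, e3, e4] at hF
      nlinarith [hsq, hF]
    have hlim := limit_real _ _ _ htpos
    linarith
  · rintro ⟨hcd, hineq⟩ z hz
    rw [habs_swap] at hineq
    have hden : c * z + d ≠ 0 := by
      intro heq
      have hd : d = -(c*z) := by linear_combination heq
      have h5 : ‖d‖ ≤ ‖c‖ * ‖z‖ := by
        rw [hd, norm_neg, norm_mul]
      nlinarith [norm_nonneg c, norm_nonneg z, norm_nonneg d]
    have hdenpos : 0 < ‖(c * z + d)‖ := norm_pos_iff.mpr hden
    rw [norm_div, div_lt_one hdenpos]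
    have hre : -(‖β‖ * ‖z‖) ≤ (β * z).re := by
      have h1 := (abs_le.mp (Complex.abs_re_le_norm (β * z))).1
      rw [norm_mul] at h1
      exact h1
    have hF := lft_idF a b c d z
    rw [← hβdef] at hF
    have hidn1 := lft_id1 a b c d
    rw [← hβdef] at hidn1
    have hidn2 := lft_id2 a b c d
    rw [← hβdef] at hidn2
    have hre2 : (β * ((starRingEnd ℂ) c * d)).re
        ≤ ‖β‖ * (‖c‖ * ‖d‖) := by
      have h1 := Complex.abs_re_le_norm (β * ((starRingEnd ℂ) c * d))
      have h2 : ‖(β * ((starRingEnd ℂ) c * d))‖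
          = ‖β‖ * (‖c‖ * ‖d‖) := by
        rw [norm_mul, norm_mul, Complex.norm_conj]
      rw [h2] at h1
      exact le_trans (le_abs_self _) h1
    have e1 : normSq c = ‖c‖ ^ 2 := (Complex.sq_norm c).symm
    have e2 : normSq a = ‖a‖ ^ 2 := (Complex.sq_norm a).symm
    have e3 : normSq d = ‖d‖ ^ 2 := (Complex.sq_norm d).symm
    have e4 : normSq b = ‖b‖ ^ 2 := (Complex.sq_norm b).symm
    have e5 : normSq β = ‖β‖ ^ 2 := (Complex.sq_norm β).symm
    have e6 : normSq (a*d - b*c) = ‖(a*d - b*c)‖ ^ 2 := (Complex.sq_norm _).symm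
    rw [e1, e2, e3, e4, e5, e6] at hidn1
    rw [e1, e2, e3, e4, e6] at hidn2
    have f1 : ‖β‖ ^2 - (‖c‖^2 - ‖a‖^2)*(‖d‖^2 - ‖b‖^2)
        = ‖(a*d - b*c)‖ ^2 := by linear_combination hidn1
    have f2 : 2*‖β‖ ≤ ‖c‖^2 + ‖d‖^2 - ‖a‖^2 - ‖b‖^2 := by
      linarith
    have f5 : (‖c‖^2 - ‖a‖^2)*‖d‖^2
        + (‖d‖^2 - ‖b‖^2)*‖c‖^2 + ‖(a*d - b*c)‖ ^2
        ≤ 2*‖β‖ * ‖c‖ * ‖d‖ := by linarith only [hidn2, hre2]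
    have hcore := core_real (‖a‖) (‖b‖) (‖c‖) (‖d‖)
      (‖β‖) (‖(a*d - b*c)‖) (‖z‖)
      (norm_nonneg β) (norm_pos_iff.mpr h) (norm_nonneg c)
      (norm_nonneg z) hz hcd f1 f2 f5
    have hlt : normSq (a*z+b) < normSq (c*z+d) := by
      have hz2 : normSq z = ‖z‖ ^ 2 := (Complex.sq_norm z).symm
      rw [e1, e2, e3, e4, hz2] at hF
      linarith only [hF, hre, hcore]
    rw [← Complex.sq_norm, ← Complex.sq_norm] at hlt
    exact lt_of_pow_lt_pow_left₀ 2 (norm_nonneg _) hlt
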